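/- Let n ≥ 2, λ < -n/2, μ a finite positive Borel measure on S^{n-1}, and u the P_λ-Poisson integral of μ. Then for every unit vector ζ, r ↦ ((1-r)^(n-1)/(1+r)^(1+2λ)) · u(rζ) is increasing and r ↦ ((1+r)^(n-1)/(1-r)^(1+2λ)) · u(rζ) is decreasing on [0,1). -/

import Mathlib

open Real MeasureTheory

private lemma sq_ineq1 {r s t : ℝ} (hr : 0 ≤ r) (hs : s < 1) (hrs : r ≤ s) (ht : |t| ≤ 1) :
    (1 - s) ^ 2 * (r ^ 2 - 2 * (r * t) + 1) ≤ (1 - r) ^ 2 * (s ^ 2 - 2 * (s * t) + 1) := by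
  have h1 : t ≤ 1 := le_of_abs_le ht
  have hs0 : 0 ≤ s := hr.trans hrs
  have hrs1 : r * s ≤ 1 := by nlinarith
  nlinarith [mul_nonneg (mul_nonneg (sub_nonneg.2 hrs) (sub_nonneg.2 h1)) (sub_nonneg.2 hrs1)]

private lemma sq_ineq2 {r s t : ℝ} (hr : 0 ≤ r) (hs : s < 1) (hrs : r ≤ s) (ht : |t| ≤ 1) :
    (1 + r) ^ 2 * (s ^ 2 - 2 * (s * t) + 1) ≤ (1 + s) ^ 2 * (r ^ 2 - 2 * (r * t) + 1) := by
  have h2 : -1 ≤ t := neg_le_of_abs_le ht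
  have hs0 : 0 ≤ s := hr.trans hrs
  have hrs1 : r * s ≤ 1 := by nlinarith
  nlinarith [mul_nonneg (mul_nonneg (sub_nonneg.2 hrs) (by linarith : (0:ℝ) ≤ 1 + t)) (sub_nonneg.2 hrs1)]

theorem stmt10 (n : ℕ) (hn : 2 ≤ n) (l : ℝ) (hl : l < -(n / 2 : ℝ))
    (μ : MeasureTheory.Measure (Metric.sphere (0 : EuclideanSpace ℝ (Fin n)) 1))
    [MeasureTheory.IsFiniteMeasure μ]
    (u : EuclideanSpace ℝ (Fin n) → ℝ)
    (hu : ∀ x, ‖x‖ < 1 →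
      u x = ∫ ξ, (1 - ‖x‖ ^ 2) ^ (1 + 2 * l) / ‖x - (ξ : EuclideanSpace ℝ (Fin n))‖ ^ ((n : ℝ) + 2 * l) ∂μ)
    (ζ : EuclideanSpace ℝ (Fin n)) (hζ : ‖ζ‖ = 1) :
    MonotoneOn (fun r : ℝ => (1 - r) ^ ((n : ℝ) - 1) / (1 + r) ^ (1 + 2 * l) * u (r • ζ))
      (Set.Ico (0:ℝ) 1) ∧
    AntitoneOn (fun r : ℝ => (1 + r) ^ ((n : ℝ) - 1) / (1 - r) ^ (1 + 2 * l) * u (r • ζ))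
      (Set.Ico (0:ℝ) 1) := by
  set p : ℝ := (n : ℝ) + 2 * l with hp
  have hpneg : p ≤ 0 := by
    have h2 : (2:ℝ) * l < -(n:ℝ) := by linarith
    simp only [hp]; linarith
  -- basic norm facts
  have hnorm : ∀ r : ℝ, 0 ≤ r → ‖r • ζ‖ = r := by
    intro r hr
    rw [norm_smul, hζ, mul_one, Real.norm_eq_abs, abs_of_nonneg hr]
  have hξ : ∀ ξ : Metric.sphere (0 : EuclideanSpace ℝ (Fin n)) 1, ‖(ξ : EuclideanSpace ℝ (Fin n))‖ = 1 := fun ξ => norm_eq_of_mem_sphere ξ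
  have hDsq : ∀ (r : ℝ), 0 ≤ r → ∀ ξ : Metric.sphere (0 : EuclideanSpace ℝ (Fin n)) 1,
      ‖r • ζ - (ξ : EuclideanSpace ℝ (Fin n))‖ ^ 2 = r ^ 2 - 2 * (r * (inner ℝ ζ (ξ : EuclideanSpace ℝ (Fin n)) : ℝ)) + 1 := by
    intro r hr ξ
    rw [norm_sub_sq_real, hnorm r hr, hξ ξ, real_inner_smul_left]
    ring
  have hDlb : ∀ (r : ℝ), 0 ≤ r → ∀ ξ : Metric.sphere (0 : EuclideanSpace ℝ (Fin n)) 1,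
      1 - r ≤ ‖r • ζ - (ξ : EuclideanSpace ℝ (Fin n))‖ := by
    intro r hr ξ
    have h := norm_sub_norm_le (ξ : EuclideanSpace ℝ (Fin n)) (r • ζ)
    rw [hξ ξ, hnorm r hr, norm_sub_rev] at h
    exact h
  have hDub : ∀ (r : ℝ), 0 ≤ r → ∀ ξ : Metric.sphere (0 : EuclideanSpace ℝ (Fin n)) 1,
      ‖r • ζ - (ξ : EuclideanSpace ℝ (Fin n))‖ ≤ 1 + r := by
    intro r hr ξ
    have h := norm_sub_le (r • ζ) (ξ : EuclideanSpace ℝ (Fin n))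
    rw [hξ ξ, hnorm r hr] at h
    linarith
  have hDpos : ∀ r ∈ Set.Ico (0:ℝ) 1, ∀ ξ : Metric.sphere (0 : EuclideanSpace ℝ (Fin n)) 1,
      0 < ‖r • ζ - (ξ : EuclideanSpace ℝ (Fin n))‖ := by
    intro r hr ξ
    have h := hDlb r hr.1 ξ
    linarith [hr.2]
  have hinner : ∀ ξ : Metric.sphere (0 : EuclideanSpace ℝ (Fin n)) 1, |(inner ℝ ζ (ξ : EuclideanSpace ℝ (Fin n)) : ℝ)| ≤ 1 := by
    intro ξ
    have h := abs_real_inner_le_norm ζ (ξ : EuclideanSpace ℝ (Fin n))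
    rwa [hζ, hξ ξ, one_mul] at h
  -- representation lemmas
  have repr1 : ∀ r ∈ Set.Ico (0:ℝ) 1,
      (1 - r) ^ ((n : ℝ) - 1) / (1 + r) ^ (1 + 2 * l) * u (r • ζ)
        = ∫ ξ, ((1 - r) / ‖r • ζ - (ξ : EuclideanSpace ℝ (Fin n))‖) ^ p ∂μ := by
    intro r hr
    have h1r : (0:ℝ) < 1 - r := by linarith [hr.2]
    have h1r' : (0:ℝ) < 1 + r := by linarith [hr.1]
    rw [hu (r • ζ) (by rw [hnorm r hr.1]; exact hr.2), hnorm r hr.1,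
      ← MeasureTheory.integral_const_mul]
    refine MeasureTheory.integral_congr_ae (Filter.Eventually.of_forall fun ξ => ?_)
    have hD := hDpos r hr ξ
    have e1 : (1 - r) ^ ((n:ℝ) - 1) * (1 - r) ^ (1 + 2*l) = (1-r) ^ p := by
      rw [← Real.rpow_add h1r]; congr 1; simp only [hp]; ring
    simp only
    rw [show (1:ℝ) - r ^ 2 = (1 - r) * (1 + r) by ring,
      Real.mul_rpow h1r.le h1r'.le, Real.div_rpow h1r.le (norm_nonneg _), ← e1]
    field_simp
  have repr2 : ∀ r ∈ Set.Ico (0:ℝ) 1,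
      (1 + r) ^ ((n : ℝ) - 1) / (1 - r) ^ (1 + 2 * l) * u (r • ζ)
        = ∫ ξ, ((1 + r) / ‖r • ζ - (ξ : EuclideanSpace ℝ (Fin n))‖) ^ p ∂μ := by
    intro r hr
    have h1r : (0:ℝ) < 1 - r := by linarith [hr.2]
    have h1r' : (0:ℝ) < 1 + r := by linarith [hr.1]
    rw [hu (r • ζ) (by rw [hnorm r hr.1]; exact hr.2), hnorm r hr.1,
      ← MeasureTheory.integral_const_mul]
    refine MeasureTheory.integral_congr_ae (Filter.Eventually.of_forall fun ξ => ?_)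
    have hD := hDpos r hr ξ
    have e1 : (1 + r) ^ ((n:ℝ) - 1) * (1 + r) ^ (1 + 2*l) = (1+r) ^ p := by
      rw [← Real.rpow_add h1r']; congr 1; simp only [hp]; ring
    simp only
    rw [show (1:ℝ) - r ^ 2 = (1 - r) * (1 + r) by ring,
      Real.mul_rpow h1r.le h1r'.le, Real.div_rpow h1r'.le (norm_nonneg _), ← e1]
    field_simp
  -- integrability
  have int1 : ∀ r ∈ Set.Ico (0:ℝ) 1,
      Integrable (fun ξ : Metric.sphere (0 : EuclideanSpace ℝ (Fin n)) 1 => ((1 - r) / ‖r • ζ - (ξ : EuclideanSpace ℝ (Fin n))‖) ^ p) μ := by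
    intro r hr
    have h1r : (0:ℝ) < 1 - r := by linarith [hr.2]
    have h1r' : (0:ℝ) < 1 + r := by linarith [hr.1]
    have hcont : Continuous fun ξ : Metric.sphere (0 : EuclideanSpace ℝ (Fin n)) 1 => (1 - r) / ‖r • ζ - (ξ : EuclideanSpace ℝ (Fin n))‖ :=
      continuous_const.div ((continuous_const.sub continuous_subtype_val).norm)
        fun ξ => (hDpos r hr ξ).ne'
    refine (integrable_const (((1 - r) / (1 + r)) ^ p)).mono' ?_ ?_
    · exact (hcont.rpow_const fun ξ => Or.inl (div_pos h1r (hDpos r hr ξ)).ne').aestronglyMeasurable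
    · refine Filter.Eventually.of_forall fun ξ => ?_
      have hD := hDpos r hr ξ
      rw [Real.norm_eq_abs, abs_of_nonneg (Real.rpow_nonneg (by positivity) _)]
      refine Real.rpow_le_rpow_of_nonpos (by positivity) ?_ hpneg
      gcongr
      exact hDub r hr.1 ξ
  have int2 : ∀ r ∈ Set.Ico (0:ℝ) 1,
      Integrable (fun ξ : Metric.sphere (0 : EuclideanSpace ℝ (Fin n)) 1 => ((1 + r) / ‖r • ζ - (ξ : EuclideanSpace ℝ (Fin n))‖) ^ p) μ := by
    intro r hr
    have h1r : (0:ℝ) < 1 - r := by linarith [hr.2]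
    have h1r' : (0:ℝ) < 1 + r := by linarith [hr.1]
    have hcont : Continuous fun ξ : Metric.sphere (0 : EuclideanSpace ℝ (Fin n)) 1 => (1 + r) / ‖r • ζ - (ξ : EuclideanSpace ℝ (Fin n))‖ :=
      continuous_const.div ((continuous_const.sub continuous_subtype_val).norm)
        fun ξ => (hDpos r hr ξ).ne'
    refine (integrable_const (1:ℝ)).mono' ?_ ?_
    · exact (hcont.rpow_const fun ξ => Or.inl (div_pos h1r' (hDpos r hr ξ)).ne').aestronglyMeasurable
    · refine Filter.Eventually.of_forall fun ξ => ?_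
      have hD := hDpos r hr ξ
      rw [Real.norm_eq_abs, abs_of_nonneg (Real.rpow_nonneg (by positivity) _)]
      calc ((1 + r) / ‖r • ζ - (ξ : EuclideanSpace ℝ (Fin n))‖) ^ p ≤ (1:ℝ) ^ p := by
            refine Real.rpow_le_rpow_of_nonpos one_pos ?_ hpneg
            exact (one_le_div hD).2 (hDub r hr.1 ξ)
        _ = 1 := Real.one_rpow p
  constructor
  · intro r hr s hs hrs
    simp only
    rw [repr1 r hr, repr1 s hs]
    refine integral_mono (int1 r hr) (int1 s hs) fun ξ => ?_
    have hDr := hDpos r hr ξ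
    have hDs := hDpos s hs ξ
    have h1s : (0:ℝ) < 1 - s := by linarith [hs.2]
    have h1r : (0:ℝ) < 1 - r := by linarith [hr.2]
    refine Real.rpow_le_rpow_of_nonpos (div_pos h1s hDs) ?_ hpneg
    rw [div_le_div_iff₀ hDs hDr]
    have hsq : ((1 - s) * ‖r • ζ - (ξ : EuclideanSpace ℝ (Fin n))‖) ^ 2 ≤ ((1 - r) * ‖s • ζ - (ξ : EuclideanSpace ℝ (Fin n))‖) ^ 2 := by
      rw [mul_pow, mul_pow, hDsq r hr.1 ξ, hDsq s hs.1 ξ]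
      exact sq_ineq1 hr.1 hs.2 hrs (hinner ξ)
    have := (pow_le_pow_iff_left₀ (mul_nonneg h1s.le (norm_nonneg _))
      (mul_nonneg h1r.le (norm_nonneg _)) two_ne_zero).mp hsq
    linarith
  · intro r hr s hs hrs
    simp only
    rw [repr2 r hr, repr2 s hs]
    refine integral_mono (int2 s hs) (int2 r hr) fun ξ => ?_
    have hDr := hDpos r hr ξ
    have hDs := hDpos s hs ξ
    have h1r' : (0:ℝ) < 1 + r := by linarith [hr.1]
    have h1s' : (0:ℝ) < 1 + s := by linarith [hs.1]
    refine Real.rpow_le_rpow_of_nonpos (div_pos h1r' hDr) ?_ hpneg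
    rw [div_le_div_iff₀ hDr hDs]
    have hsq : ((1 + r) * ‖s • ζ - (ξ : EuclideanSpace ℝ (Fin n))‖) ^ 2 ≤ ((1 + s) * ‖r • ζ - (ξ : EuclideanSpace ℝ (Fin n))‖) ^ 2 := by
      rw [mul_pow, mul_pow, hDsq r hr.1 ξ, hDsq s hs.1 ξ]
      exact sq_ineq2 hr.1 hs.2 hrs (hinner ξ)
    have := (pow_le_pow_iff_left₀ (mul_nonneg h1r'.le (norm_nonneg _))
      (mul_nonneg h1s'.le (norm_nonneg _)) two_ne_zero).mp hsq
    linarith
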